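/- Define g(s, t) = (−(σ² + t − s) + √((σ² + t − s)² + 4σ²s))/(2σ²) for s, t ≥ 0 and σ² > 0. Then for every fixed s > 0 the map t ↦ g(s, t) is strictly decreasing on [0, ∞), and for every fixed t ≥ 0 the map s ↦ g(s, t) is strictly increasing on (0, ∞). -/
import Mathlib

lemma aux_sqrt_anti (c : ℝ) (hc : 0 < c) {A B : ℝ} (hAB : A < B) :
    -B + Real.sqrt (B ^ 2 + c) < -A + Real.sqrt (A ^ 2 + c) := by
  have h1 : A < Real.sqrt (A ^ 2 + c) :=
    calc A ≤ |A| := le_abs_self _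
      _ = Real.sqrt (A ^ 2) := (Real.sqrt_sq_eq_abs _).symm
      _ < _ := Real.sqrt_lt_sqrt (sq_nonneg _) (by linarith)
  have hpos : 0 < B - A + Real.sqrt (A ^ 2 + c) := by
    have := Real.sqrt_nonneg (A ^ 2 + c); linarith
  have h2 : Real.sqrt (B ^ 2 + c) < B - A + Real.sqrt (A ^ 2 + c) := by
    rw [Real.sqrt_lt' hpos]
    have hs := Real.sq_sqrt (show (0:ℝ) ≤ A ^ 2 + c by positivity)
    nlinarith [h1, hs]
  linarith

/-- Monotonicity of `γ*₁,S3` as a function of the signal power `s = Pa²`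
and the interference power `t = Qb²`. -/
theorem stmt_3 (σ2 : ℝ) (hσ : 0 < σ2) (g : ℝ → ℝ → ℝ)
    (hg : ∀ s t : ℝ, g s t =
      (-(σ2 + t - s) + Real.sqrt ((σ2 + t - s) ^ 2 + 4 * σ2 * s)) / (2 * σ2)) :
    (∀ s : ℝ, 0 < s → StrictAntiOn (fun t => g s t) (Set.Ici 0)) ∧
    (∀ t : ℝ, 0 ≤ t → StrictMonoOn (fun s => g s t) (Set.Ioi 0)) := by
  have h2σ : 0 < 2 * σ2 := by linarith
  constructor
  · intro s hs t₁ _ t₂ _ h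
    simp only [hg]
    have hc : 0 < 4 * σ2 * s := by positivity
    have key := aux_sqrt_anti (4 * σ2 * s) hc
      (show σ2 + t₁ - s < σ2 + t₂ - s by linarith)
    exact div_lt_div_of_pos_right (by linarith) h2σ
  · intro t ht s₁ hs₁ s₂ hs₂ h
    have hs₁' : 0 < s₁ := hs₁
    have hs₂' : 0 < s₂ := hs₂
    simp only [hg]
    have hc : 0 < 4 * σ2 * s₁ := by positivity
    have key := aux_sqrt_anti (4 * σ2 * s₁) hc
      (show σ2 + t - s₂ < σ2 + t - s₁ by linarith)
    have key2 : Real.sqrt ((σ2 + t - s₂) ^ 2 + 4 * σ2 * s₁) <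
        Real.sqrt ((σ2 + t - s₂) ^ 2 + 4 * σ2 * s₂) :=
      Real.sqrt_lt_sqrt (by positivity) (by nlinarith)
    exact div_lt_div_of_pos_right (by linarith) h2σ
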